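/- Let Y be a complex k×k matrix defined by Y_{ij} = e_iᵀφ(e_j), where e₁,…,e_k is a Hermitian-orthonormal basis of an isotropic subspace H₁ ⊆ ℂ^a and φ : H₁ → H₂ is a ℂ-linear isomorphism onto an isotropic subspace H₂ satisfying xᵀφ(y) = −φ(x)ᵀy for all x,y ∈ H₁; assume moreover that any isotropic vector annihilating both H₁ and H₂ (under the bilinear pairing) is zero. Then Y is antisymmetric and invertible; in particular k = dim_ℂ H₁ is even. -/

import Mathlib

open Matrix
/-- The complex bilinear pairing on `ℂ^a`. -/
noncomputable def bil {a : ℕ} (v w : Fin a → ℂ) : ℂ := ∑ i, v i * w i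

lemma bil_eq_dot {a : ℕ} (v w : Fin a → ℂ) : bil v w = v ⬝ᵥ w := rfl

lemma bil_comm {a : ℕ} (v w : Fin a → ℂ) : bil v w = bil w v := by
  simp [bil, mul_comm]

/-- Let `H₁, H₂ ⊆ ℂ^a` be isotropic, `e₁,…,e_k` a Hermitian-orthonormal basis of `H₁`,
`φ : H₁ ≃ H₂` ℂ-linear with `xᵀφ(y) = -φ(x)ᵀy`, and suppose the only isotropic vector
annihilating both `H₁` and `H₂` is zero. Then `Y = (eᵢᵀφ(eⱼ))ᵢⱼ` is antisymmetric and
invertible; in particular `k = dim_ℂ H₁` is even. -/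
theorem stmt16 {a k : ℕ} (H₁ H₂ : Submodule ℂ (Fin a → ℂ))
    (h1 : ∀ x ∈ H₁, ∀ y ∈ H₁, bil x y = 0)
    (h2 : ∀ x ∈ H₂, ∀ y ∈ H₂, bil x y = 0)
    (e : Fin k → (Fin a → ℂ)) (he : ∀ i, e i ∈ H₁)
    (hspan : Submodule.span ℂ (Set.range e) = H₁)
    (horth : ∀ i j, ∑ l, (starRingEnd ℂ) (e i l) * e j l = if i = j then 1 else 0)
    (φ : H₁ ≃ₗ[ℂ] H₂)
    (hanti : ∀ x y : H₁, bil (x : Fin a → ℂ) ((φ y : Fin a → ℂ))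
      = -bil ((φ x : Fin a → ℂ)) (y : Fin a → ℂ))
    (hnd : ∀ x : Fin a → ℂ, bil x x = 0 → (∀ y ∈ H₁, bil x y = 0) →
      (∀ y ∈ H₂, bil x y = 0) → x = 0)
    (Y : Matrix (Fin k) (Fin k) ℂ)
    (hY : ∀ i j, Y i j = bil (e i) ((φ ⟨e j, he j⟩ : Fin a → ℂ))) :
    Yᵀ = -Y ∧ IsUnit Y ∧ Even k := by
  have hT : Yᵀ = -Y := by
    ext i j
    simp only [transpose_apply, Matrix.neg_apply, hY]
    rw [hanti ⟨e j, he j⟩ ⟨e i, he i⟩, bil_comm]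
  have hker : ∀ c : Fin k → ℂ, Y *ᵥ c = 0 → c = 0 := by
    intro c hc
    set u : H₁ := ∑ j, c j • (⟨e j, he j⟩ : H₁) with hu
    set x : Fin a → ℂ := (φ u : Fin a → ℂ) with hx
    have hxH2 : x ∈ H₂ := (φ u).2
    have hx_eq : x = ∑ j, c j • ((φ ⟨e j, he j⟩ : H₂) : Fin a → ℂ) := by
      rw [hx, hu, map_sum]
      push_cast
      refine Finset.sum_congr rfl fun j _ => ?_
      rw [LinearEquiv.map_smul]
      rfl
    have hbe : ∀ i, bil (e i) x = 0 := by
      intro i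
      have hci : ∑ j, Y i j * c j = 0 := by
        have := congrFun hc i
        simpa [mulVec, dotProduct] using this
      rw [hx_eq]
      calc bil (e i) (∑ j, c j • ((φ ⟨e j, he j⟩ : H₂) : Fin a → ℂ))
          = ∑ j, Y i j * c j := by
            simp only [bil, Finset.sum_apply, Pi.smul_apply, smul_eq_mul, Finset.mul_sum, hY]
            rw [Finset.sum_comm]
            refine Finset.sum_congr rfl fun j _ => ?_
            rw [Finset.sum_mul]
            exact Finset.sum_congr rfl fun l _ => by ring
        _ = 0 := hci
    have hxx : bil x x = 0 := h2 x hxH2 x hxH2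
    have hxH1 : ∀ y ∈ H₁, bil x y = 0 := by
      intro y hy
      rw [← hspan] at hy
      induction hy using Submodule.span_induction with
      | mem z hz => obtain ⟨i, rfl⟩ := hz; rw [bil_comm]; exact hbe i
      | zero => simp [bil]
      | add y z _ _ hy hz =>
          rw [bil_eq_dot, dotProduct_add, ← bil_eq_dot, ← bil_eq_dot, hy, hz, add_zero]
      | smul t y _ hy =>
          rw [bil_eq_dot, dotProduct_smul, ← bil_eq_dot, hy, smul_zero]
    have hx0 : x = 0 := hnd x hxx hxH1 (fun y hy => h2 x hxH2 y hy)
    have hu0 : u = 0 := by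
      have : φ u = 0 := Subtype.ext (by rw [← hx, hx0]; rfl)
      exact (LinearEquiv.map_eq_zero_iff φ).mp this
    have hval : (u : Fin a → ℂ) = ∑ j, c j • e j := by
      simp [hu]
    funext i
    have key : ∑ l, (starRingEnd ℂ) (e i l) * (u : Fin a → ℂ) l = c i := by
      rw [hval]
      simp only [Finset.sum_apply, Pi.smul_apply, smul_eq_mul, Finset.mul_sum]
      rw [Finset.sum_comm]
      calc ∑ j, ∑ l, (starRingEnd ℂ) (e i l) * (c j * e j l)
          = ∑ j, c j * ∑ l, (starRingEnd ℂ) (e i l) * e j l := by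
            refine Finset.sum_congr rfl fun j _ => ?_
            rw [Finset.mul_sum]
            exact Finset.sum_congr rfl fun l _ => by ring
        _ = c i := by simp [horth]
    have : (u : Fin a → ℂ) = 0 := by rw [hu0]; rfl
    rw [this] at key
    simpa using key.symm
  have hinj : Function.Injective Y.mulVec := by
    intro c₁ c₂ h
    have := hker (c₁ - c₂) (by rw [mulVec_sub, h, sub_self])
    exact sub_eq_zero.mp this
  have hU : IsUnit Y := mulVec_injective_iff_isUnit.mp hinj
  refine ⟨hT, hU, ?_⟩
  have hdet : IsUnit Y.det := Y.isUnit_iff_isUnit_det.mp hU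
  have : Y.det = (-1 : ℂ) ^ k * Y.det := by
    conv_lhs => rw [← det_transpose, hT, det_neg]
    simp [Fintype.card_fin]
  have h1k : ((-1 : ℂ)) ^ k = 1 := (mul_eq_right₀ hdet.ne_zero).mp this.symm
  exact (neg_one_pow_eq_one_iff_even (by norm_num : (-1:ℂ) ≠ 1)).mp h1k
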